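/- Let C ⊆ ℝ^d be a closed convex cone with nonempty dual cone interior, J: 𝒳 → ℝ^d a function on a nonempty set 𝒳, and suppose for each ζ ∈ C⁺\{0} there exists y_ζ ∈ 𝒳 minimizing ζ·J(·) over 𝒳. Set M = {y_ζ : ζ ∈ C⁺\{0}} and Γ_M = cl co ⋃_{y∈M}(J(y)+C). Then for every y₀ ∈ 𝒳, J(y₀) ∈ Γ_M. -/

import Mathlib

open Pointwise

/-- abstract core of Theorem 4.1: if for every `ζ ∈ C⁺ \ {0}` the element
`ysel ζ` minimizes `ζ·J(·)` over `𝒳` (here: over all of the nonempty type `α`), then every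
value `J(y₀)` belongs to `Γ_M = cl co ⋃_{y ∈ M} (J(y)+C)` where `M = ysel '' (C⁺\{0})`. -/
theorem stmt11 {d : ℕ} {α : Type*} [Nonempty α]
    (C : Set (EuclideanSpace ℝ (Fin d)))
    (hCne : C.Nonempty) (hCclosed : IsClosed C) (hCconv : Convex ℝ C)
    (hCcone : ∀ c ∈ C, ∀ s : ℝ, 0 ≤ s → s • c ∈ C)
    (hCproper : C ≠ Set.univ)
    (hCdualint : (interior {ξ : EuclideanSpace ℝ (Fin d) |
        ∀ c ∈ C, 0 ≤ (inner ℝ ξ c : ℝ)}).Nonempty)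
    (J : α → EuclideanSpace ℝ (Fin d))
    (ysel : EuclideanSpace ℝ (Fin d) → α)
    (hysel : ∀ ζ ∈ ({ξ : EuclideanSpace ℝ (Fin d) | ∀ c ∈ C, 0 ≤ (inner ℝ ξ c : ℝ)} \ {0} :
        Set (EuclideanSpace ℝ (Fin d))),
      ∀ y : α, (inner ℝ ζ (J (ysel ζ)) : ℝ) ≤ (inner ℝ ζ (J y) : ℝ)) :
    ∀ y₀ : α, J y₀ ∈ closure (convexHull ℝ
      (⋃ y ∈ ysel '' ({ξ : EuclideanSpace ℝ (Fin d) | ∀ c ∈ C, 0 ≤ (inner ℝ ξ c : ℝ)} \ {0} :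
          Set (EuclideanSpace ℝ (Fin d))), ({J y} + C))) := by
  classical
  set K : Set (EuclideanSpace ℝ (Fin d)) :=
    {ξ : EuclideanSpace ℝ (Fin d) | ∀ c ∈ C, 0 ≤ (inner ℝ ξ c : ℝ)} with hK
  set S : Set (EuclideanSpace ℝ (Fin d)) :=
    ⋃ y ∈ ysel '' (K \ {0}), ({J y} + C) with hS
  -- 0 ∈ C
  obtain ⟨c₀, hc₀⟩ := hCne
  have h0C : (0 : EuclideanSpace ℝ (Fin d)) ∈ C := by
    have := hCcone c₀ hc₀ 0 le_rfl
    simpa using this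
  -- d ≠ 0, so the space is nontrivial
  have hd : d ≠ 0 := by
    intro hd0
    subst hd0
    exact hCproper (Set.eq_univ_of_forall fun x => by
      have : x = c₀ := Subsingleton.elim x c₀
      rwa [this])
  have : NeZero d := ⟨hd⟩
  have hnt : Nontrivial (EuclideanSpace ℝ (Fin d)) := inferInstance
  -- pick ζ₀ ∈ K \ {0}
  obtain ⟨ξ, hξ⟩ := hCdualint
  have hζ₀ : ∃ ζ₀, ζ₀ ∈ K \ ({0} : Set (EuclideanSpace ℝ (Fin d))) := by
    by_cases hξ0 : ξ = 0
    · obtain ⟨ε, hε, hball⟩ := Metric.isOpen_iff.1 isOpen_interior ξ hξ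
      obtain ⟨v, hv⟩ := exists_ne (0 : EuclideanSpace ℝ (Fin d))
      refine ⟨ξ + (ε / 2 / ‖v‖) • v, interior_subset (hball ?_), ?_⟩
      · have hvn : ‖v‖ ≠ 0 := norm_ne_zero_iff.2 hv
        simp only [Metric.mem_ball, dist_eq_norm, add_sub_cancel_left, norm_smul]
        rw [Real.norm_eq_abs, abs_of_nonneg (by positivity)]
        rw [div_mul_cancel₀ _ hvn]
        linarith
      · simp only [hξ0, zero_add, Set.mem_singleton_iff]
        intro h
        have hvn : ‖v‖ ≠ 0 := norm_ne_zero_iff.2 hv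
        have : (ε / 2 / ‖v‖ : ℝ) ≠ 0 := by positivity
        exact hv (by simpa [smul_eq_zero, this] using h)
    · exact ⟨ξ, interior_subset hξ, hξ0⟩
  obtain ⟨ζ₀, hζ₀K⟩ := hζ₀
  -- membership lemma for S
  have hmemS : ∀ ζ' ∈ K \ ({0} : Set (EuclideanSpace ℝ (Fin d))), ∀ c ∈ C,
      J (ysel ζ') + c ∈ S := by
    intro ζ' hζ' c hc
    refine Set.mem_biUnion (Set.mem_image_of_mem ysel hζ') ?_
    exact Set.add_mem_add rfl hc
  intro y₀
  by_contra hcontra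
  obtain ⟨f, u, hfu, hsep⟩ := geometric_hahn_banach_point_closed
    ((convex_convexHull ℝ S).closure) isClosed_closure hcontra
  set ζ : EuclideanSpace ℝ (Fin d) := (InnerProductSpace.toDual ℝ _).symm f with hζ
  have hζf : ∀ x, (inner ℝ ζ x : ℝ) = f x := fun x =>
    InnerProductSpace.toDual_symm_apply
  have hsep' : ∀ x ∈ S, u < f x := fun x hx =>
    hsep x (subset_closure (subset_convexHull ℝ S hx))
  -- f (J (ysel ζ₀)) > u
  have hJζ₀ : u < f (J (ysel ζ₀)) := by
    have := hsep' (J (ysel ζ₀) + 0) (hmemS ζ₀ hζ₀K 0 h0C)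
    simpa using this
  -- ζ ∈ K
  have hζK : ζ ∈ K := by
    intro c hc
    rw [hζf]
    by_contra hneg
    push_neg at hneg
    set s : ℝ := (f (J (ysel ζ₀)) - u) / (-f c) + 1 with hs
    have hs0 : 0 ≤ s := by
      have h1 : 0 < -f c := by linarith
      have h2 : 0 < f (J (ysel ζ₀)) - u := by linarith
      positivity
    have hmem := hsep' (J (ysel ζ₀) + s • c) (hmemS ζ₀ hζ₀K _ (hCcone c hc s hs0))
    rw [map_add, map_smul] at hmem
    have hfc : f c ≠ 0 := by linarith
    have h3 : f c / -f c = -1 := by rw [div_neg, div_self hfc]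
    have : (f (J (ysel ζ₀)) - u) / (-f c) * f c = -(f (J (ysel ζ₀)) - u) := by
      rw [div_mul_eq_mul_div, mul_div_assoc, h3]; ring
    simp only [smul_eq_mul, hs, add_mul, this, one_mul] at hmem
    linarith
  -- ζ ≠ 0
  have hζ0 : ζ ≠ 0 := by
    intro h
    have h1 : f (J y₀) = 0 := by rw [← hζf, h]; simp
    have h2 : f (J (ysel ζ₀)) = 0 := by rw [← hζf, h]; simp
    linarith
  -- contradiction via hysel
  have hmin := hysel ζ ⟨hζK, hζ0⟩ y₀
  have h1 : u < f (J (ysel ζ)) := by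
    have := hsep' (J (ysel ζ) + 0) (hmemS ζ ⟨hζK, hζ0⟩ 0 h0C)
    simpa using this
  rw [hζf, hζf] at hmin
  linarith
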